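/- Spectral decomposition of the reconstruction MSE: let U be an N×N real orthogonal matrix, λ : Fin N → ℝ, g_c, g_d : ℝ → ℝ, x ∈ ℝ^N a fixed signal with spectral projection x* = Uᵀx, and ε a mean-zero random vector with E[ε_i ε_j] = σ²·δ_{ij} and square-integrable components. Define the reconstruction x̂ = U·diag(g_d(λ_i)·g_c(λ_i))·Uᵀ·x + U·diag(g_d(λ_i))·Uᵀ·ε. Then E‖x̂ − x‖² = Σ_{i=1}^{N} [(g_d(λ_i)·g_c(λ_i) − 1)²·(x*_i)² + g_d(λ_i)²·σ²]. -/

import Mathlib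

open MeasureTheory Matrix

/-- Spectral decomposition of the reconstruction MSE.  For an orthogonal `U`,
eigenvalues `λ`, filters `g_c, g_d`, a fixed signal `x` with spectral projection `x* = Uᵀ x`,
and a mean-zero random vector `ε` with `E[ε_i ε_j] = σ² δ_{ij}` and square-integrable
components, the reconstruction
`x̂ = U diag(g_d(λ_i) g_c(λ_i)) Uᵀ x + U diag(g_d(λ_i)) Uᵀ ε` satisfies
`E‖x̂ − x‖² = ∑ i, (g_d(λ_i) g_c(λ_i) − 1)² (x*_i)² + g_d(λ_i)² σ²`. -/
theorem reconstruction_mse_spectral_decomposition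
    {N : ℕ} {Ω : Type*} [MeasurableSpace Ω] (μ : Measure Ω) [IsProbabilityMeasure μ]
    (ε : Ω → Fin N → ℝ) (hεL2 : ∀ i, MemLp (fun ω => ε ω i) 2 μ)
    (hεmean : ∀ i, ∫ ω, ε ω i ∂μ = 0)
    (σ2 : ℝ)
    (hcov : ∀ i j, ∫ ω, ε ω i * ε ω j ∂μ = if i = j then σ2 else 0)
    (U : Matrix (Fin N) (Fin N) ℝ) (hU : Uᵀ * U = 1)
    (lam : Fin N → ℝ) (gc gd : ℝ → ℝ) (x : Fin N → ℝ)
    (xstar : Fin N → ℝ) (hxstar : xstar = Uᵀ.mulVec x)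
    (xhat : Ω → Fin N → ℝ)
    (hxhat : ∀ ω, xhat ω =
      U.mulVec ((Matrix.diagonal fun i => gd (lam i) * gc (lam i)).mulVec (Uᵀ.mulVec x))
        + U.mulVec ((Matrix.diagonal fun i => gd (lam i)).mulVec (Uᵀ.mulVec (ε ω)))) :
    ∫ ω, ‖(EuclideanSpace.equiv (Fin N) ℝ).symm (xhat ω - x)‖ ^ 2 ∂μ
      = ∑ i, ((gd (lam i) * gc (lam i) - 1) ^ 2 * xstar i ^ 2 + gd (lam i) ^ 2 * σ2) := by
  classical
  set A : Fin N → ℝ := fun i => (gd (lam i) * gc (lam i) - 1) * xstar i with hA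
  set B : Fin N → Fin N → ℝ := fun i k => gd (lam i) * U k i with hB
  have hUUt : U * Uᵀ = 1 := mul_eq_one_comm.mp hU
  -- pointwise identity
  have hpt : ∀ ω, ‖(EuclideanSpace.equiv (Fin N) ℝ).symm (xhat ω - x)‖ ^ 2
      = ∑ i, (A i + ∑ k, B i k * ε ω k) ^ 2 := by
    intro ω
    set v : Fin N → ℝ := fun i => A i + ∑ k, B i k * ε ω k with hv
    have hdiff : xhat ω - x = U.mulVec v := by
      have hvw : v = (Matrix.diagonal fun i => gd (lam i) * gc (lam i)).mulVec (Uᵀ.mulVec x)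
          + (Matrix.diagonal fun i => gd (lam i)).mulVec (Uᵀ.mulVec (ε ω)) - Uᵀ.mulVec x := by
        funext i
        have hUt : (Uᵀ.mulVec (ε ω)) i = ∑ k, U k i * ε ω k := by
          simp [Matrix.mulVec, dotProduct, Matrix.transpose_apply]
        rw [Pi.sub_apply, Pi.add_apply, Matrix.mulVec_diagonal, Matrix.mulVec_diagonal,
          ← hxstar, hUt]
        simp only [hv, hA, hB, Finset.mul_sum]
        ring_nf
      have hUx : U.mulVec (Uᵀ.mulVec x) = x := by
        rw [Matrix.mulVec_mulVec, hUUt, Matrix.one_mulVec]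
      rw [hvw, Matrix.mulVec_sub, Matrix.mulVec_add, hUx, hxhat ω]
    rw [hdiff]
    have hnorm : ∀ u : Fin N → ℝ, ‖(EuclideanSpace.equiv (Fin N) ℝ).symm u‖ ^ 2
        = ∑ j, u j ^ 2 := by
      intro u
      rw [EuclideanSpace.norm_eq]
      rw [Real.sq_sqrt (by positivity)]
      simp [Real.norm_eq_abs, sq_abs]
    rw [hnorm]
    have : ∑ j, (U.mulVec v) j ^ 2 = (U.mulVec v) ⬝ᵥ (U.mulVec v) := by
      simp [dotProduct, sq]
    rw [this]
    have : (U.mulVec v) ⬝ᵥ (U.mulVec v) = v ⬝ᵥ v := by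
      rw [dotProduct_mulVec]
      have : (U.mulVec v) ᵥ* U = v := by
        have h1 : (U.mulVec v) ᵥ* U = Uᵀ.mulVec (U.mulVec v) := by
          rw [Matrix.mulVec_transpose]
        rw [h1, Matrix.mulVec_mulVec, hU, Matrix.one_mulVec]
      rw [this]
    rw [this]
    simp [dotProduct, sq, hv]
  have hInt1 : ∀ k, Integrable (fun ω => ε ω k) μ := fun k => (hεL2 k).integrable one_le_two
  have hInt2 : ∀ k l, Integrable (fun ω => ε ω k * ε ω l) μ := by
    intro k l
    have h := (hεL2 l).smul (hεL2 k) (p := 2) (q := 2) (r := 1)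
    exact memLp_one_iff_integrable.mp h
  have hexp : ∀ ω (i : Fin N), (A i + ∑ k, B i k * ε ω k) ^ 2
      = A i ^ 2 + ((∑ k, (2 * A i * B i k) * ε ω k)
        + ∑ k, ∑ l, (B i k * B i l) * (ε ω k * ε ω l)) := by
    intro ω i
    have h1 : (∑ k, B i k * ε ω k) ^ 2
        = ∑ k, ∑ l, (B i k * B i l) * (ε ω k * ε ω l) := by
      rw [sq, Finset.sum_mul_sum]
      exact Finset.sum_congr rfl fun k _ => Finset.sum_congr rfl fun l _ => by ring
    have h2 : 2 * A i * (∑ k, B i k * ε ω k) = ∑ k, (2 * A i * B i k) * ε ω k := by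
      rw [Finset.mul_sum]
      exact Finset.sum_congr rfl fun k _ => by ring
    rw [add_sq, h1, h2, add_assoc]
  have hiInt : ∀ i : Fin N, Integrable (fun ω => (A i + ∑ k, B i k * ε ω k) ^ 2) μ := by
    intro i
    have : (fun ω => (A i + ∑ k, B i k * ε ω k) ^ 2)
        = fun ω => A i ^ 2 + ((∑ k, (2 * A i * B i k) * ε ω k)
          + ∑ k, ∑ l, (B i k * B i l) * (ε ω k * ε ω l)) := funext fun ω => hexp ω i
    rw [this]
    exact (integrable_const _).add
      ((integrable_finset_sum _ fun k _ => (hInt1 k).const_mul _).add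
        (integrable_finset_sum _ fun k _ =>
          integrable_finset_sum _ fun l _ => (hInt2 k l).const_mul _))
  have hcol : ∀ i : Fin N, ∑ k, U k i ^ 2 = 1 := by
    intro i
    have h := congrFun (congrFun hU i) i
    simpa [Matrix.mul_apply, Matrix.transpose_apply, Matrix.one_apply, sq] using h
  calc ∫ ω, ‖(EuclideanSpace.equiv (Fin N) ℝ).symm (xhat ω - x)‖ ^ 2 ∂μ
      = ∫ ω, ∑ i, (A i + ∑ k, B i k * ε ω k) ^ 2 ∂μ := by
        exact integral_congr_ae (Filter.Eventually.of_forall hpt)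
    _ = ∑ i, ∫ ω, (A i + ∑ k, B i k * ε ω k) ^ 2 ∂μ :=
        integral_finset_sum _ fun i _ => hiInt i
    _ = ∑ i, ((gd (lam i) * gc (lam i) - 1) ^ 2 * xstar i ^ 2 + gd (lam i) ^ 2 * σ2) := by
        refine Finset.sum_congr rfl fun i _ => ?_
        have hfe : (fun ω => (A i + ∑ k, B i k * ε ω k) ^ 2)
            = fun ω => A i ^ 2 + ((∑ k, (2 * A i * B i k) * ε ω k)
              + ∑ k, ∑ l, (B i k * B i l) * (ε ω k * ε ω l)) := funext fun ω => hexp ω i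
        have hg1 : Integrable (fun ω => ∑ k, (2 * A i * B i k) * ε ω k) μ :=
          integrable_finset_sum _ fun k _ => (hInt1 k).const_mul _
        have hg2 : Integrable
            (fun ω => ∑ k, ∑ l, (B i k * B i l) * (ε ω k * ε ω l)) μ :=
          integrable_finset_sum _ fun k _ =>
            integrable_finset_sum _ fun l _ => (hInt2 k l).const_mul _
        have hg12 : Integrable (fun ω => (∑ k, (2 * A i * B i k) * ε ω k)
            + ∑ k, ∑ l, (B i k * B i l) * (ε ω k * ε ω l)) μ := hg1.add hg2
        have hc : Integrable (fun _ : Ω => A i ^ 2) μ := integrable_const _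
        rw [hfe, integral_add hc hg12,
          integral_add hg1 hg2,
          integral_finset_sum _ (fun k _ => (hInt1 k).const_mul _),
          integral_finset_sum _ (fun k _ =>
            integrable_finset_sum _ fun l _ => (hInt2 k l).const_mul _)]
        simp only [integral_const, measure_univ, probReal_univ, ENNReal.toReal_one, one_smul,
          smul_eq_mul]
        have e1 : ∀ k : Fin N, ∫ ω, (2 * A i * B i k) * ε ω k ∂μ = 0 := by
          intro k
          rw [integral_const_mul, hεmean k, mul_zero]
        have e2 : ∀ k : Fin N, ∫ ω, ∑ l, (B i k * B i l) * (ε ω k * ε ω l) ∂μ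
            = B i k ^ 2 * σ2 := by
          intro k
          rw [integral_finset_sum _ (fun l _ => (hInt2 k l).const_mul _)]
          have : ∀ l : Fin N, ∫ ω, (B i k * B i l) * (ε ω k * ε ω l) ∂μ
              = if k = l then B i k ^ 2 * σ2 else 0 := by
            intro l
            rw [integral_const_mul, hcov k l]
            by_cases h : k = l <;> simp [h, sq]
          simp only [this, Finset.sum_ite_eq, Finset.mem_univ, if_true]
        simp only [e1, e2, Finset.sum_const_zero, zero_add]
        have : ∑ k, B i k ^ 2 * σ2 = gd (lam i) ^ 2 * σ2 := by
          simp only [hB, mul_pow]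
          rw [← Finset.sum_mul, ← Finset.mul_sum, hcol i, mul_one]
        rw [this, hA]
        ring
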